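/- Let n ≥ 1, let P be an n×n permutation matrix, let c, d ∈ ℝ, and let e = (1, 1, …, 1) ∈ ℝⁿ. Then the linear map Φ : ℝⁿ → ℝⁿ defined by Φ(x) = c·(P *ᵥ x) + d·(Σᵢ xᵢ)·e is strictly isotone: Φ(x) ≺ Φ(y) whenever x ≺ y. -/

import Mathlib

open Matrix BigOperators

/-- A matrix is doubly stochastic: nonnegative entries, row sums and column sums all 1. -/
def IsDoublyStochastic {n : ℕ} (A : Matrix (Fin n) (Fin n) ℝ) : Prop :=
  (∀ i j, 0 ≤ A i j) ∧ (∀ i, ∑ j, A i j = 1) ∧ (∀ j, ∑ i, A i j = 1)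

/-- `Maj x y` means `x ≺ y`: `x` is majorized by `y`. -/
def Maj {n : ℕ} (x y : Fin n → ℝ) : Prop :=
  ∃ A : Matrix (Fin n) (Fin n) ℝ, IsDoublyStochastic A ∧ x = A *ᵥ y

/-- `MajEq x y` means `x ∼ y`: mutual majorization. -/
def MajEq {n : ℕ} (x y : Fin n → ℝ) : Prop := Maj x y ∧ Maj y x

/-- `P` is a permutation matrix. -/
def IsPermMatrix {n : ℕ} (P : Matrix (Fin n) (Fin n) ℝ) : Prop :=
  ∃ σ : Equiv.Perm (Fin n), P = σ.permMatrix ℝ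

/-- The increasing rearrangement `x↑` of a vector. -/
noncomputable def incSort {n : ℕ} (x : Fin n → ℝ) : Fin n → ℝ := x ∘ Tuple.sort x

/-- The decreasing rearrangement `x↓` of a vector. -/
noncomputable def decSort {n : ℕ} (x : Fin n → ℝ) : Fin n → ℝ :=
  fun i => (x ∘ Tuple.sort x) i.rev

lemma permMatrix_mulVec {n : ℕ} (σ : Equiv.Perm (Fin n)) (v : Fin n → ℝ) (i : Fin n) :
    (σ.permMatrix ℝ *ᵥ v) i = v (σ i) := by
  simp [Equiv.Perm.permMatrix, mulVec, dotProduct, PEquiv.toMatrix_apply,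
    Equiv.toPEquiv_apply]

/-- the map `x ↦ c·(P *ᵥ x) + d·(tr x)·e` is strictly isotone. -/
theorem perm_add_trace_isotone {n : ℕ} (hn : 1 ≤ n) (P : Matrix (Fin n) (Fin n) ℝ)
    (hP : IsPermMatrix P) (c d : ℝ) :
    ∀ x y : Fin n → ℝ, Maj x y →
      Maj (c • (P *ᵥ x) + (d * ∑ i, x i) • (fun _ => (1 : ℝ)))
        (c • (P *ᵥ y) + (d * ∑ i, y i) • (fun _ => (1 : ℝ))) := by
  rintro x y ⟨A, ⟨hpos, hrow, hcol⟩, rfl⟩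
  obtain ⟨σ, rfl⟩ := hP
  have hs : ∑ i, (A *ᵥ y) i = ∑ i, y i := by
    simp only [mulVec, dotProduct]
    rw [Finset.sum_comm]
    simp only [← Finset.sum_mul, hcol, one_mul]
  refine ⟨fun i j => A (σ i) (σ j), ⟨fun i j => hpos _ _, fun i => ?_, fun j => ?_⟩, ?_⟩
  · exact (Equiv.sum_comp σ (fun j => A (σ i) j)).trans (hrow (σ i))
  · exact (Equiv.sum_comp σ (fun i => A i (σ j))).trans (hcol (σ j))
  · erw [mulVec_add, mulVec_smul, mulVec_smul]
    have he : (fun i j => A (σ i) (σ j)) *ᵥ (fun _ => (1:ℝ)) = (fun _ => (1:ℝ)) := by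
      funext i
      simp only [mulVec, dotProduct, mul_one]
      exact (Equiv.sum_comp σ (fun j => A (σ i) j)).trans (hrow (σ i))
    have hB : (fun i j => A (σ i) (σ j)) *ᵥ (σ.permMatrix ℝ *ᵥ y)
        = σ.permMatrix ℝ *ᵥ (A *ᵥ y) := by
      funext i
      simp only [mulVec, dotProduct, Equiv.Perm.permMatrix, PEquiv.toMatrix_apply,
        Equiv.toPEquiv_apply, Option.mem_def, Option.some.injEq, ite_mul, one_mul, zero_mul, mul_ite,
        mul_one, mul_zero, Finset.sum_ite_eq, Finset.mem_univ, if_true]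
      exact Equiv.sum_comp σ (fun j => A (σ i) j * y j)
    rw [he, hB, hs]
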